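/- Let H be a real Hilbert space and A ⊆ H a nonempty bounded set with mDW(A) > 0. Let f : H → ℝ be Fréchet differentiable and μ-strongly convex (μ > 0): f(v) ≥ f(u) + ⟪∇f(u), v − u⟫ + (μ/2)‖v − u‖² for all u, v ∈ H. Let x, y ∈ conv(A) with ⟪∇f(x), y − x⟫ < 0, and set S := sup_{s∈A} ⟪−∇f(x), s⟫. Then S > 0, and f(y) − f(x) − ⟪∇f(x), y − x⟫ ≥ (γ²/2)·μ·mDW(A)², where γ := ⟪−∇f(x), y − x⟫ / S. (Equivalently, the affine-invariant quantity μ^MP_{f,A} is bounded below by μ·mDW(A)².) -/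

import Mathlib

open scoped RealInnerProductSpace Pointwise

/-- Directional width of a set `A` in direction `d`: `W_A(d) = sup_{z ∈ A} ⟪d / ‖d‖, z⟫`. -/
noncomputable def dirWidth {H : Type*} [NormedAddCommGroup H] [InnerProductSpace ℝ H]
    (A : Set H) (d : H) : ℝ :=
  sSup ((fun z => ⟪(‖d‖)⁻¹ • d, z⟫) '' A)

/-- Minimal intrinsic directional width of `A`. -/
noncomputable def mDW {H : Type*} [NormedAddCommGroup H] [InnerProductSpace ℝ H]
    (A : Set H) : ℝ :=
  sInf (dirWidth A '' {d | d ∈ Submodule.span ℝ A ∧ d ≠ 0})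

/-- The affine invariant strong-convexity quantity `μ^MP_{f,A}` is bounded below by
`μ · mDW(A)²` for a `μ`-strongly convex function (Lemma 2 / `lemma:MUFwithMDW`). -/
theorem muMP_ge_strongConvexity_mul_mDW_sq
    {H : Type*} [NormedAddCommGroup H] [InnerProductSpace ℝ H] [CompleteSpace H]
    (A : Set H) (hA : A.Nonempty) (hAbdd : Bornology.IsBounded A)
    (hmdw : 0 < mDW A)
    (μ : ℝ) (hμ : 0 < μ)
    (f : H → ℝ) (f' : H → H)
    (hdiff : ∀ w : H, HasGradientAt f (f' w) w)
    (hstrong : ∀ u v : H, f u + ⟪f' u, v - u⟫ + μ / 2 * ‖v - u‖ ^ 2 ≤ f v)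
    (x y : H) (hx : x ∈ convexHull ℝ A) (hy : y ∈ convexHull ℝ A)
    (hneg : ⟪f' x, y - x⟫ < 0) :
    0 < sSup ((fun s => ⟪-f' x, s⟫) '' A) ∧
      (⟪-f' x, y - x⟫ / sSup ((fun s => ⟪-f' x, s⟫) '' A)) ^ 2 / 2 * (μ * (mDW A) ^ 2)
        ≤ f y - f x - ⟪f' x, y - x⟫ := by
  obtain ⟨C, hC⟩ := hAbdd.exists_norm_le
  obtain ⟨a₀, ha₀⟩ := hA
  have hC0 : 0 ≤ C := le_trans (norm_nonneg a₀) (hC a₀ ha₀)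
  have hmdw0 : 0 ≤ mDW A := le_of_lt hmdw
  have hbdd : ∀ v : H, BddAbove ((fun s => ⟪v, s⟫) '' A) := by
    intro v
    refine ⟨‖v‖ * C, ?_⟩
    rintro _ ⟨s, hs, rfl⟩
    calc ⟪v, s⟫ ≤ ‖v‖ * ‖s‖ := real_inner_le_norm v s
      _ ≤ ‖v‖ * C := mul_le_mul_of_nonneg_left (hC s hs) (norm_nonneg v)
  set V := (Submodule.span ℝ A).topologicalClosure with hVdef
  haveI : CompleteSpace V := (Submodule.isClosed_topologicalClosure _).completeSpace_coe
  have hAV : A ⊆ (V : Set H) := fun s hs =>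
    (Submodule.le_topologicalClosure _) (Submodule.subset_span hs)
  have hconvV : convexHull ℝ A ⊆ (V : Set H) := by
    apply convexHull_min hAV
    exact V.convex
  set d : H := -f' x with hd
  set w : H := (V.orthogonalProjection d : H) with hwdef
  have hwV : w ∈ V := Submodule.coe_mem _
  have horth : ∀ s ∈ V, ⟪d, s⟫ = ⟪w, s⟫ := by
    intro s hs
    have h1 : d - w ∈ Vᗮ := V.sub_starProjection_mem_orthogonal d
    have h2 : ⟪s, d - w⟫ = 0 := (Submodule.mem_orthogonal V (d - w)).mp h1 s hs
    have h3 : ⟪d - w, s⟫ = (0:ℝ) := by rw [real_inner_comm]; exact h2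
    have h4 : ⟪d, s⟫ - ⟪w, s⟫ = (0:ℝ) := by rw [← inner_sub_left]; exact h3
    linarith
  have hyx : y - x ∈ V := V.sub_mem (hconvV hy) (hconvV hx)
  have hpos : 0 < ⟪d, y - x⟫ := by
    rw [hd, inner_neg_left]; linarith
  have hwyx : ⟪w, y - x⟫ = ⟪d, y - x⟫ := (horth _ hyx).symm
  have hwne : w ≠ 0 := by
    intro h
    rw [h, inner_zero_left] at hwyx
    linarith
  have hwpos : 0 < ‖w‖ := norm_pos_iff.mpr hwne
  have hBddBelowDW : BddBelow (dirWidth A '' {d | d ∈ Submodule.span ℝ A ∧ d ≠ 0}) := by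
    refine ⟨-C, ?_⟩
    rintro _ ⟨d', ⟨hd1, hd2⟩, rfl⟩
    have hu : ‖(‖d'‖)⁻¹ • d'‖ = 1 := by
      rw [norm_smul, norm_inv, norm_norm, inv_mul_cancel₀ (norm_ne_zero_iff.mpr hd2)]
    have habs := abs_real_inner_le_norm ((‖d'‖)⁻¹ • d') a₀
    rw [hu, one_mul] at habs
    have hnegabs := neg_abs_le ⟪(‖d'‖)⁻¹ • d', a₀⟫
    have hca := hC a₀ ha₀
    have h1 : -C ≤ ⟪(‖d'‖)⁻¹ • d', a₀⟫ := by linarith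
    exact le_trans h1 (le_csSup (hbdd _) ⟨a₀, ha₀, rfl⟩)
  have hkey : ∀ d' : H, d' ∈ Submodule.span ℝ A → d' ≠ 0 →
      ‖d'‖ * mDW A ≤ sSup ((fun s => ⟪d', s⟫) '' A) := by
    intro d' hd1 hd2
    have hmle : mDW A ≤ dirWidth A d' := csInf_le hBddBelowDW ⟨d', ⟨hd1, hd2⟩, rfl⟩
    have hnd : 0 < ‖d'‖ := norm_pos_iff.mpr hd2
    have hdw : dirWidth A d' ≤ (‖d'‖)⁻¹ * sSup ((fun s => ⟪d', s⟫) '' A) := by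
      refine csSup_le ⟨_, a₀, ha₀, rfl⟩ ?_
      rintro _ ⟨s, hs, rfl⟩
      dsimp only
      have h1 : ⟪(‖d'‖)⁻¹ • d', s⟫ = (‖d'‖)⁻¹ * ⟪d', s⟫ := real_inner_smul_left d' s _
      rw [h1]
      exact mul_le_mul_of_nonneg_left (le_csSup (hbdd d') ⟨s, hs, rfl⟩) (inv_nonneg.mpr hnd.le)
    calc ‖d'‖ * mDW A ≤ ‖d'‖ * dirWidth A d' := mul_le_mul_of_nonneg_left hmle hnd.le
      _ ≤ ‖d'‖ * ((‖d'‖)⁻¹ * sSup ((fun s => ⟪d', s⟫) '' A)) :=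
        mul_le_mul_of_nonneg_left hdw hnd.le
      _ = sSup ((fun s => ⟪d', s⟫) '' A) := by
        rw [← mul_assoc, mul_inv_cancel₀ hnd.ne', one_mul]
  have hS : ‖w‖ * mDW A ≤ sSup ((fun s => ⟪d, s⟫) '' A) := by
    refine le_of_forall_pos_le_add ?_
    intro ε hε
    have hden : 0 < C + mDW A + 1 := by linarith
    set δ := min (ε / (C + mDW A + 1)) ‖w‖ with hδdef
    have hδpos : 0 < δ := lt_min (div_pos hε hden) hwpos
    have hwcl : w ∈ closure ((Submodule.span ℝ A : Set H)) := by
      have h := hwV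
      rw [hVdef] at h
      rwa [← Submodule.topologicalClosure_coe]
    obtain ⟨d', hd'mem, hd'dist⟩ := Metric.mem_closure_iff.mp hwcl δ hδpos
    have hdist : ‖w - d'‖ < δ := by rwa [dist_eq_norm] at hd'dist
    have hd'ne : d' ≠ 0 := by
      intro h
      rw [h, sub_zero] at hdist
      have := min_le_right (ε / (C + mDW A + 1)) ‖w‖
      linarith
    have hT : sSup ((fun s => ⟪d', s⟫) '' A) ≤ sSup ((fun s => ⟪d, s⟫) '' A) + δ * C := by
      refine csSup_le ⟨_, a₀, ha₀, rfl⟩ ?_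
      rintro _ ⟨s, hs, rfl⟩
      dsimp only
      have h1 : ⟪d', s⟫ = ⟪w, s⟫ + ⟪d' - w, s⟫ := by rw [inner_sub_left]; ring
      have h2 : ⟪w, s⟫ = ⟪d, s⟫ := (horth s (hAV hs)).symm
      have h3 : ⟪d, s⟫ ≤ sSup ((fun s => ⟪d, s⟫) '' A) := le_csSup (hbdd d) ⟨s, hs, rfl⟩
      have h4 : ⟪d' - w, s⟫ ≤ ‖d' - w‖ * ‖s‖ := real_inner_le_norm _ _
      have h5 : ‖d' - w‖ ≤ δ := by rw [norm_sub_rev]; linarith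
      have h6 : ‖d' - w‖ * ‖s‖ ≤ δ * C :=
        mul_le_mul h5 (hC s hs) (norm_nonneg _) hδpos.le
      linarith
    have h7 := hkey d' hd'mem hd'ne
    have h8 : ‖w‖ ≤ ‖d'‖ + δ := by
      have := norm_sub_norm_le w d'
      linarith
    have h9 : δ * (C + mDW A) ≤ ε := by
      have hδ1 : δ ≤ ε / (C + mDW A + 1) := min_le_left _ _
      have h10 : δ * (C + mDW A) ≤ (ε / (C + mDW A + 1)) * (C + mDW A) := by
        apply mul_le_mul_of_nonneg_right hδ1; linarith
      have h11 : (ε / (C + mDW A + 1)) * (C + mDW A + 1) = ε := div_mul_cancel₀ ε hden.ne'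
      have h12 : 0 ≤ ε / (C + mDW A + 1) := le_of_lt (div_pos hε hden)
      nlinarith
    nlinarith [mul_le_mul_of_nonneg_right h8 hmdw0]
  have hSpos : 0 < sSup ((fun s => ⟪d, s⟫) '' A) :=
    lt_of_lt_of_le (mul_pos hwpos hmdw) hS
  refine ⟨hSpos, ?_⟩
  set S := sSup ((fun s => ⟪d, s⟫) '' A) with hSdef
  have hCS : ⟪d, y - x⟫ ≤ ‖w‖ * ‖y - x‖ := by
    rw [← hwyx]; exact real_inner_le_norm w (y - x)
  have hγ : ⟪d, y - x⟫ / S * mDW A ≤ ‖y - x‖ := by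
    rw [div_mul_eq_mul_div, div_le_iff₀ hSpos]
    calc ⟪d, y - x⟫ * mDW A ≤ (‖w‖ * ‖y - x‖) * mDW A :=
        mul_le_mul_of_nonneg_right hCS hmdw0
      _ = (‖w‖ * mDW A) * ‖y - x‖ := by ring
      _ ≤ S * ‖y - x‖ := mul_le_mul_of_nonneg_right hS (norm_nonneg _)
      _ = ‖y - x‖ * S := by ring
  have hγ0 : 0 ≤ ⟪d, y - x⟫ / S := div_nonneg hpos.le hSpos.le
  have hsq : (⟪d, y - x⟫ / S * mDW A) ^ 2 ≤ ‖y - x‖ ^ 2 :=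
    pow_le_pow_left₀ (mul_nonneg hγ0 hmdw0) hγ 2
  have hstr := hstrong x y
  nlinarith [hsq, hstr, hμ, sq_nonneg (⟪d, y - x⟫ / S * mDW A)]
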